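/- Let A be an n×n quaternion matrix with group inverse X and Moore–Penrose inverse Y, and set Z := X·A·Y. For every positive integer m, if Y_m is a Moore–Penrose inverse of A^m, then Z^m = X^m·A^m·Y_m; that is, (A^⊕)^m = (A^m)^⊕ (note that X^m is a group inverse of A^m, so the right-hand side is the right core inverse of A^m). -/
import Mathlib


/-- `(A^⊕)^m = (A^m)^⊕`: the `m`-th power of the right core inverse `X·A·Y`
equals `X^m·A^m·Y_m`, where `Y_m` is a Moore–Penrose inverse of `A^m`. -/
theorem core_inverse_pow {n : ℕ}
    (A X Y : Matrix (Fin n) (Fin n) (Quaternion ℝ))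
    (hX1 : A * X * A = A) (hX2 : X * A * X = X) (hX3 : A * X = X * A)
    (hY1 : A * Y * A = A) (hY2 : Y * A * Y = Y)
    (hY3 : (A * Y).conjTranspose = A * Y) (hY4 : (Y * A).conjTranspose = Y * A)
    (m : ℕ) (hm : 0 < m) (Ym : Matrix (Fin n) (Fin n) (Quaternion ℝ))
    (hYm1 : A ^ m * Ym * A ^ m = A ^ m) (hYm2 : Ym * A ^ m * Ym = Ym)
    (hYm3 : (A ^ m * Ym).conjTranspose = A ^ m * Ym)
    (hYm4 : (Ym * A ^ m).conjTranspose = Ym * A ^ m) :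
    (X * A * Y) ^ m = X ^ m * A ^ m * Ym := by
  obtain ⟨k, rfl⟩ : ∃ k, m = k + 1 := ⟨m - 1, (Nat.succ_pred_eq_of_pos hm).symm⟩
  have hc : Commute A X := hX3
  -- A * (A*X)^j = A
  have hAX : ∀ j : ℕ, A * (A * X) ^ j = A := by
    intro j
    induction j with
    | zero => simp
    | succ j ih =>
      rw [pow_succ', ← mul_assoc]
      have h : A * (A * X) = A := by
        rw [hX3, ← mul_assoc, hX1]
      rw [h, ih]
  -- A^(k+1) * X^k = A
  have hAeq : A ^ (k + 1) * X ^ k = A := by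
    rw [pow_succ', mul_assoc, ← hc.mul_pow, hAX]
  -- A^(k+1)*Ym*A = A
  have hQA : A ^ (k + 1) * Ym * A = A := by
    nth_rewrite 2 [← hAeq]
    rw [← mul_assoc, hYm1, hAeq]
  -- A*Y*A^(k+1) = A^(k+1)
  have hAYA : A * Y * A ^ (k + 1) = A ^ (k + 1) := by
    rw [pow_succ', ← mul_assoc, hY1]
  -- Q = P * Q where P = A*Y, Q = A^(k+1)*Ym
  have hPQ : (A * Y) * (A ^ (k + 1) * Ym) = A ^ (k + 1) * Ym := by
    rw [← mul_assoc, hAYA]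
  -- Q = Q * P by conjugate transposing
  have hQP : (A ^ (k + 1) * Ym) * (A * Y) = A ^ (k + 1) * Ym := by
    conv_lhs => rw [← hYm3, ← hY3, ← Matrix.conjTranspose_mul, hPQ, hYm3]
  -- Q * P = P
  have hQP' : (A ^ (k + 1) * Ym) * (A * Y) = A * Y := by
    rw [← mul_assoc, hQA]
  -- hence P = Q
  have hPeqQ : A * Y = A ^ (k + 1) * Ym := by
    rw [← hQP', hQP]
  -- (X*A*Y)^(j+1) = X^(j+1)*(A*Y)
  have hZ : ∀ j : ℕ, (X * A * Y) ^ (j + 1) = X ^ (j + 1) * (A * Y) := by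
    intro j
    induction j with
    | zero => rw [pow_one, pow_one, mul_assoc]
    | succ j ih =>
      rw [pow_succ, ih]
      have key : (A * Y) * (X * A * Y) = X * (A * Y) := by
        have h1 : X * A * Y = A * (X * Y) := by rw [← hX3, mul_assoc]
        rw [h1, ← mul_assoc, hY1, ← mul_assoc, hX3, mul_assoc]
      rw [mul_assoc, key, ← mul_assoc, ← pow_succ]
  rw [hZ k, hPeqQ, ← mul_assoc]
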